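/- Let θ_m (m ≥ 2) be a generalized θ-graph, consisting of two vertices u and v joined by m internally vertex-disjoint paths. Then μ_int(θ_m) = 1 if θ_m is not an Eulerian graph with an odd number of edges, and μ_int(θ_m) = 2 if θ_m is Eulerian and has an odd number of edges. -/

import Mathlib

open SimpleGraph

/-- The set ("spectrum") of colors appearing on edges incident to vertex `v`
under the edge coloring `c`. -/
def SimpleGraph.colorSpectrum {V : Type*} (G : SimpleGraph V) (c : Sym2 V → ℕ) (v : V) :
    Set ℕ :=
  {n | ∃ w, G.Adj v w ∧ c s(v, w) = n}

/-- A set of natural numbers is an interval of consecutive integers. -/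
def IsIntervalSet (S : Set ℕ) : Prop :=
  ∀ a ∈ S, ∀ b ∈ S, ∀ x, a ≤ x → x ≤ b → x ∈ S

/-- `c` is a `k`-improper interval edge coloring of `G`: at most `k` edges with a common
endpoint share a color, and the colors at each vertex form an interval. -/
def SimpleGraph.IsImproperIntervalColoring {V : Type*} (G : SimpleGraph V)
    (c : Sym2 V → ℕ) (k : ℕ) : Prop :=
  (∀ v n, {w | G.Adj v w ∧ c s(v, w) = n}.ncard ≤ k) ∧
    ∀ v, IsIntervalSet (G.colorSpectrum c v)

/-- The interval coloring impropriety of `G`: the least `k` such that `G` has a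
`k`-improper interval edge coloring. -/
noncomputable def SimpleGraph.muInt {V : Type*} (G : SimpleGraph V) : ℕ :=
  sInf {k | ∃ c : Sym2 V → ℕ, G.IsImproperIntervalColoring c k}

open scoped Classical

/-- Vertices of the generalized θ-graph: the two endpoints `u = Sum.inl true` and
`v = Sum.inl false`, together with the internal vertices of the `m` paths, where the
`i`-th path has length `ℓ i` (hence `ℓ i - 1` internal vertices). -/
abbrev ThetaVert (m : ℕ) (ℓ : Fin m → ℕ) : Type :=
  Bool ⊕ (Σ i : Fin m, Fin (ℓ i - 1))

/-- The generalized θ-graph `θ_m`: two vertices `u` and `v` joined by `m` internally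
vertex-disjoint paths, the `i`-th of length `ℓ i`. -/
def theta (m : ℕ) (ℓ : Fin m → ℕ) : SimpleGraph (ThetaVert m ℓ) :=
  SimpleGraph.fromRel (fun a b =>
    (a = Sum.inl true ∧ b = Sum.inl false ∧ ∃ i, ℓ i = 1) ∨
    (∃ i j, a = Sum.inl true ∧ b = Sum.inr ⟨i, j⟩ ∧ (j : ℕ) = 0) ∨
    (∃ (i : Fin m) (j j' : Fin (ℓ i - 1)),
      a = Sum.inr ⟨i, j⟩ ∧ b = Sum.inr ⟨i, j'⟩ ∧ (j' : ℕ) = (j : ℕ) + 1) ∨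
    (∃ (i : Fin m) (j : Fin (ℓ i - 1)),
      a = Sum.inr ⟨i, j⟩ ∧ b = Sum.inl false ∧ (j : ℕ) + 2 = ℓ i))

namespace ThetaAux
variable {m : ℕ} {ℓ : Fin m → ℕ}

def walk (a b t : ℕ) : ℕ :=
  if a ≤ b then (if t ≤ b - a then a + t else b + (t - (b - a)) % 2)
  else (if t ≤ a - b then a - t else b + (t - (a - b)) % 2)

lemma walk_zero (a b : ℕ) : walk a b 0 = a := by
  simp only [walk]; split_ifs <;> omega

lemma walk_step (a b t : ℕ) : Nat.dist (walk a b t) (walk a b (t+1)) = 1 := by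
  simp only [walk, Nat.dist]; split_ifs <;> omega

lemma walk_last (a b s : ℕ) (h : Nat.dist a b ≤ s) (hp : Even (s - Nat.dist a b)) :
    walk a b s = b := by
  rcases hp with ⟨c, hc⟩
  simp only [walk, Nat.dist] at *; split_ifs <;> omega



def vu (m : ℕ) (ℓ : Fin m → ℕ) : ThetaVert m ℓ := Sum.inl true
def vv (m : ℕ) (ℓ : Fin m → ℕ) : ThetaVert m ℓ := Sum.inl false
def vX (i : Fin m) (j : Fin (ℓ i - 1)) : ThetaVert m ℓ := Sum.inr ⟨i, j⟩

lemma X_inj {i i' : Fin m} {j : Fin (ℓ i - 1)} {j' : Fin (ℓ i' - 1)} :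
    (vX i j : ThetaVert m ℓ) = vX i' j' ↔ i = i' ∧ (j : ℕ) = (j' : ℕ) := by
  constructor
  · intro h
    simp only [vX, Sum.inr.injEq, Sigma.mk.inj_iff] at h
    obtain ⟨rfl, h2⟩ := h
    exact ⟨rfl, by rw [heq_iff_eq] at h2; rw [h2]⟩
  · rintro ⟨rfl, h⟩
    have : j = j' := Fin.ext h
    rw [this]

lemma adj_u_iff {w : ThetaVert m ℓ} :
    (theta m ℓ).Adj (vu m ℓ) w ↔
      (w = vv m ℓ ∧ ∃ i, ℓ i = 1) ∨
        (∃ i, ∃ j : Fin (ℓ i - 1), w = vX i j ∧ (j : ℕ) = 0) := by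
  rw [vu, vv] <;> rw [theta] <;> rw [fromRel_adj] <;> simp only [vX]
  constructor
  · rintro ⟨hne, h | h⟩
    · rcases h with ⟨_, h, hi⟩ | ⟨i, j, _, hw, hj⟩ | ⟨i, j, j', h, _, _⟩ | ⟨i, j, h, _, _⟩
      · exact Or.inl ⟨h, hi⟩
      · exact Or.inr ⟨i, j, hw, hj⟩
      · exact absurd h (by simp)
      · exact absurd h (by simp)
    · rcases h with ⟨_, h, _⟩ | ⟨i, j, _, h, _⟩ | ⟨i, j, j', _, h, _⟩ | ⟨i, j, _, h, _⟩
      · exact absurd h (by simp)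
      · exact absurd h (by simp)
      · exact absurd h (by simp)
      · exact absurd h (by simp)
  · rintro (⟨rfl, hi⟩ | ⟨i, j, rfl, hj⟩)
    · exact ⟨by simp, Or.inl (Or.inl ⟨by trivial, by trivial, hi⟩)⟩
    · exact ⟨by simp, Or.inl (Or.inr (Or.inl ⟨i, j, by trivial, by trivial, hj⟩))⟩

lemma adj_v_iff {w : ThetaVert m ℓ} :
    (theta m ℓ).Adj (vv m ℓ) w ↔
      (w = vu m ℓ ∧ ∃ i, ℓ i = 1) ∨
        (∃ i, ∃ j : Fin (ℓ i - 1), w = vX i j ∧ (j : ℕ) + 2 = ℓ i) := by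
  rw [vu, vv] <;> rw [theta] <;> rw [fromRel_adj] <;> simp only [vX]
  constructor
  · rintro ⟨hne, h | h⟩
    · rcases h with ⟨h, _, _⟩ | ⟨i, j, h, _, _⟩ | ⟨i, j, j', h, _, _⟩ | ⟨i, j, h, _, _⟩
      · exact absurd h (by simp)
      · exact absurd h (by simp)
      · exact absurd h (by simp)
      · exact absurd h (by simp)
    · rcases h with ⟨hw, _, hi⟩ | ⟨i, j, _, h, _⟩ | ⟨i, j, j', _, h, _⟩ | ⟨i, j, hw, _, hj⟩
      · exact Or.inl ⟨hw, hi⟩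
      · exact absurd h (by simp)
      · exact absurd h (by simp)
      · exact Or.inr ⟨i, j, hw, hj⟩
  · rintro (⟨rfl, hi⟩ | ⟨i, j, rfl, hj⟩)
    · exact ⟨by simp, Or.inr (Or.inl ⟨by trivial, by trivial, hi⟩)⟩
    · exact ⟨by simp, Or.inr (Or.inr (Or.inr (Or.inr ⟨i, j, by trivial, by trivial, hj⟩)))⟩

lemma adj_X_iff {i : Fin m} {j : Fin (ℓ i - 1)} {w : ThetaVert m ℓ} :
    (theta m ℓ).Adj (vX i j) w ↔
      (w = vu m ℓ ∧ (j : ℕ) = 0) ∨ (w = vv m ℓ ∧ (j : ℕ) + 2 = ℓ i) ∨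
        (∃ j' : Fin (ℓ i - 1), w = vX i j' ∧ Nat.dist (j : ℕ) (j' : ℕ) = 1) := by
  rw [vu, vv] <;> rw [theta] <;> rw [fromRel_adj] <;> simp only [vX]
  constructor
  · rintro ⟨hne, h | h⟩
    · rcases h with ⟨h, _, _⟩ | ⟨i', j', h, _, _⟩ | ⟨i', j1, j2, h, hw, hj⟩ | ⟨i', j1, h, hw, hj⟩
      · exact absurd h (by simp)
      · exact absurd h (by simp)
      · obtain ⟨hi, hj1⟩ := (X_inj (ℓ := ℓ)).mp h
        subst hi
        refine Or.inr (Or.inr ⟨j2, hw, ?_⟩)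
        simp only [Nat.dist]; omega
      · obtain ⟨hi, hj1⟩ := (X_inj (ℓ := ℓ)).mp h
        subst hi
        exact Or.inr (Or.inl ⟨hw, by omega⟩)
    · rcases h with ⟨_, h, _⟩ | ⟨i', j', hw, h, hj⟩ | ⟨i', j1, j2, hw, h, hj⟩ | ⟨i', j1, _, h, _⟩
      · exact absurd h (by simp)
      · obtain ⟨hi, hj1⟩ := (X_inj (ℓ := ℓ)).mp h
        subst hi
        exact Or.inl ⟨hw, by omega⟩
      · obtain ⟨hi, hj1⟩ := (X_inj (ℓ := ℓ)).mp h
        subst hi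
        refine Or.inr (Or.inr ⟨j1, hw, ?_⟩)
        simp only [Nat.dist]; omega
      · exact absurd h (by simp)
  · rintro (⟨rfl, hj⟩ | ⟨rfl, hj⟩ | ⟨j', rfl, hj⟩)
    · exact ⟨by simp, Or.inr (Or.inr (Or.inl ⟨i, j, by trivial, by trivial, hj⟩))⟩
    · exact ⟨by simp, Or.inl (Or.inr (Or.inr (Or.inr ⟨i, j, by trivial, by trivial, hj⟩)))⟩
    · have hne : (Sum.inr ⟨i, j⟩ : ThetaVert m ℓ) ≠ Sum.inr ⟨i, j'⟩ := by
        intro h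
        obtain ⟨_, h2⟩ := (X_inj (ℓ := ℓ)).mp h
        simp only [Nat.dist] at hj; omega
      refine ⟨hne, ?_⟩
      simp only [Nat.dist] at hj
      rcases Nat.lt_or_ge (j : ℕ) (j' : ℕ) with hlt | hge
      · exact Or.inl (Or.inr (Or.inr (Or.inl ⟨i, j, j', by trivial, by trivial, by omega⟩)))
      · exact Or.inr (Or.inr (Or.inr (Or.inl ⟨i, j', j, by trivial, by trivial, by omega⟩)))


section Coloring
variable (hℓ : ∀ i, 1 ≤ ℓ i) (hone : ∀ i j, ℓ i = 1 → ℓ j = 1 → i = j)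

noncomputable def i0 (m : ℕ) (ℓ : Fin m → ℕ) (hm : 0 < m) : Fin m :=
  if h : ∃ i, ℓ i = 1 then h.choose else ⟨0, hm⟩

lemma i0_spec {hm : 0 < m} (h : ∃ i, ℓ i = 1) : ℓ (i0 m ℓ hm) = 1 := by
  rw [i0, dif_pos h]; exact h.choose_spec

noncomputable def fcol (g : Fin m → ℕ → ℕ) (hm : 0 < m) : ThetaVert m ℓ → ThetaVert m ℓ → ℕ
  | Sum.inl _, Sum.inl _ => g (i0 m ℓ hm) 0
  | Sum.inl true, Sum.inr p => g p.1 0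
  | Sum.inl false, Sum.inr p => g p.1 (ℓ p.1 - 1)
  | Sum.inr p, Sum.inl true => g p.1 0
  | Sum.inr p, Sum.inl false => g p.1 (ℓ p.1 - 1)
  | Sum.inr p, Sum.inr q => if p.1 = q.1 then g p.1 (min p.2.val q.2.val + 1) else 0

lemma fcol_symm (g : Fin m → ℕ → ℕ) (hm : 0 < m) (a b : ThetaVert m ℓ) :
    fcol g hm a b = fcol g hm b a := by
  rcases a with (_ | _) | ⟨i, j⟩ <;> rcases b with (_ | _) | ⟨i', j'⟩ <;>
    simp only [fcol]
  by_cases h : i = i'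
  · subst h
    simp [Nat.min_comm]
  · rw [if_neg h, if_neg (fun hh => h hh.symm)]

noncomputable def ccol (g : Fin m → ℕ → ℕ) (hm : 0 < m) : Sym2 (ThetaVert m ℓ) → ℕ :=
  Sym2.lift ⟨fcol g hm, fcol_symm g hm⟩

lemma ccol_uv (g : Fin m → ℕ → ℕ) (hm : 0 < m) :
    ccol g hm s(vu m ℓ, vv m ℓ) = g (i0 m ℓ hm) 0 := rfl

lemma ccol_uX (g : Fin m → ℕ → ℕ) (hm : 0 < m) (i : Fin m) (j : Fin (ℓ i - 1)) :
    ccol g hm s(vu m ℓ, vX i j) = g i 0 := rfl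

lemma ccol_vX (g : Fin m → ℕ → ℕ) (hm : 0 < m) (i : Fin m) (j : Fin (ℓ i - 1)) :
    ccol g hm s(vv m ℓ, vX i j) = g i (ℓ i - 1) := rfl

lemma ccol_XX (g : Fin m → ℕ → ℕ) (hm : 0 < m) (i : Fin m) (j j' : Fin (ℓ i - 1)) :
    ccol g hm s(vX i j, vX i j') = g i (min j.val j'.val + 1) := by
  rw [ccol, vX, vX, Sym2.lift_mk]
  simp [fcol]

end Coloring

section Spectra
variable {g : Fin m → ℕ → ℕ} {hm : 0 < m}

lemma spectrum_u (hℓ : ∀ i, 1 ≤ ℓ i) (hone : ∀ i j, ℓ i = 1 → ℓ j = 1 → i = j) :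
    (theta m ℓ).colorSpectrum (ccol g hm) (vu m ℓ) = Set.range (fun i => g i 0) := by
  ext n
  constructor
  · rintro ⟨w, hadj, hc⟩
    rw [adj_u_iff] at hadj
    rcases hadj with ⟨rfl, hex⟩ | ⟨i, j, rfl, hj⟩
    · exact ⟨i0 m ℓ hm, by rw [← hc, ccol_uv]⟩
    · exact ⟨i, by rw [← hc, ccol_uX]⟩
  · rintro ⟨i, rfl⟩
    by_cases h2 : 2 ≤ ℓ i
    · refine ⟨vX i ⟨0, by omega⟩, adj_u_iff.mpr (Or.inr ⟨i, ⟨0, by omega⟩, rfl, rfl⟩), ?_⟩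
      exact ccol_uX g hm i ⟨0, by omega⟩
    · have h1 : ℓ i = 1 := by have := hℓ i; omega
      have hex : ∃ i, ℓ i = 1 := ⟨i, h1⟩
      have hi : i0 m ℓ hm = i := hone _ _ (i0_spec hex) h1
      exact ⟨vv m ℓ, adj_u_iff.mpr (Or.inl ⟨rfl, hex⟩), by rw [ccol_uv, hi]⟩

lemma spectrum_v (hℓ : ∀ i, 1 ≤ ℓ i) (hone : ∀ i j, ℓ i = 1 → ℓ j = 1 → i = j) :
    (theta m ℓ).colorSpectrum (ccol g hm) (vv m ℓ) =
      Set.range (fun i => g i (ℓ i - 1)) := by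
  ext n
  constructor
  · rintro ⟨w, hadj, hc⟩
    rw [adj_v_iff] at hadj
    rcases hadj with ⟨rfl, hex⟩ | ⟨i, j, rfl, hj⟩
    · refine ⟨i0 m ℓ hm, ?_⟩
      have h1 := i0_spec (hm := hm) hex
      have : ccol g hm s(vv m ℓ, vu m ℓ) = g (i0 m ℓ hm) 0 := by
        rw [Sym2.eq_swap]; exact ccol_uv g hm
      show g (i0 m ℓ hm) (ℓ (i0 m ℓ hm) - 1) = n
      rw [h1, ← hc, this]
    · refine ⟨i, ?_⟩
      rw [← hc, ccol_vX]
  · rintro ⟨i, rfl⟩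
    by_cases h2 : 2 ≤ ℓ i
    · have hj : ℓ i - 2 < ℓ i - 1 := by omega
      refine ⟨vX i ⟨ℓ i - 2, hj⟩, adj_v_iff.mpr (Or.inr ⟨i, ⟨ℓ i - 2, hj⟩, rfl, by simp only [Fin.val_mk]; omega⟩), ?_⟩
      exact ccol_vX g hm i ⟨ℓ i - 2, hj⟩
    · have h1 : ℓ i = 1 := by have := hℓ i; omega
      have hex : ∃ i, ℓ i = 1 := ⟨i, h1⟩
      have hi : i0 m ℓ hm = i := hone _ _ (i0_spec hex) h1
      refine ⟨vu m ℓ, adj_v_iff.mpr (Or.inl ⟨rfl, hex⟩), ?_⟩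
      have : ccol g hm s(vv m ℓ, vu m ℓ) = g (i0 m ℓ hm) 0 := by
        rw [Sym2.eq_swap]; exact ccol_uv g hm
      show g (i0 m ℓ hm) 0 = g i (ℓ i - 1)
      rw [hi, h1]

lemma spectrum_X (i : Fin m) (j : Fin (ℓ i - 1)) :
    (theta m ℓ).colorSpectrum (ccol g hm) (vX i j) =
      {g i j.val, g i (j.val + 1)} := by
  have hjlt : (j : ℕ) < ℓ i - 1 := j.isLt
  ext n
  constructor
  · rintro ⟨w, hadj, hc⟩
    rw [adj_X_iff] at hadj
    rcases hadj with ⟨rfl, hj0⟩ | ⟨rfl, hj2⟩ | ⟨j', rfl, hd⟩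
    · left
      have : ccol g hm s(vX i j, vu m ℓ) = g i 0 := by
        rw [Sym2.eq_swap]; exact ccol_uX g hm i j
      rw [← hc, this, hj0]
    · right
      have : ccol g hm s(vX i j, vv m ℓ) = g i (ℓ i - 1) := by
        rw [Sym2.eq_swap]; exact ccol_vX g hm i j
      rw [← hc, this]
      congr 1
      omega
    · rw [← hc, ccol_XX]
      simp only [Nat.dist] at hd
      rcases Nat.lt_or_ge (j : ℕ) (j' : ℕ) with hlt | hge
      · right; congr 1; omega
      · left; congr 1; omega
  · rintro (rfl | rfl)
    · by_cases h0 : (j : ℕ) = 0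
      · refine ⟨vu m ℓ, adj_X_iff.mpr (Or.inl ⟨rfl, h0⟩), ?_⟩
        have : ccol g hm s(vX i j, vu m ℓ) = g i 0 := by
          rw [Sym2.eq_swap]; exact ccol_uX g hm i j
        rw [this, h0]
      · have hlt : (j : ℕ) - 1 < ℓ i - 1 := by omega
        refine ⟨vX i ⟨(j : ℕ) - 1, hlt⟩,
          adj_X_iff.mpr (Or.inr (Or.inr ⟨⟨(j : ℕ) - 1, hlt⟩, rfl, by simp only [Nat.dist, Fin.val_mk]; omega⟩)), ?_⟩
        rw [ccol_XX]
        congr 1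
        simp only []
        omega
    · by_cases h2 : (j : ℕ) + 2 = ℓ i
      · refine ⟨vv m ℓ, adj_X_iff.mpr (Or.inr (Or.inl ⟨rfl, h2⟩)), ?_⟩
        have : ccol g hm s(vX i j, vv m ℓ) = g i (ℓ i - 1) := by
          rw [Sym2.eq_swap]; exact ccol_vX g hm i j
        rw [this]
        congr 1
        omega
      · have hlt : (j : ℕ) + 1 < ℓ i - 1 := by omega
        refine ⟨vX i ⟨(j : ℕ) + 1, hlt⟩,
          adj_X_iff.mpr (Or.inr (Or.inr ⟨⟨(j : ℕ) + 1, hlt⟩, rfl, by simp only [Nat.dist, Fin.val_mk]; omega⟩)), ?_⟩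
        rw [ccol_XX]
        congr 1
        simp only []
        omega

end Spectra

section Properness
variable {g : Fin m → ℕ → ℕ} {hm : 0 < m}

lemma ncard_le_one_of_subsingleton {α : Type*} {s : Set α} (h : s.Subsingleton) :
    s.ncard ≤ 1 := by
  rcases h.eq_empty_or_singleton with rfl | ⟨a, rfl⟩
  · simp
  · simp

lemma key_u (hℓ : ∀ i, 1 ≤ ℓ i) {w : ThetaVert m ℓ} {n : ℕ}
    (hadj : (theta m ℓ).Adj (vu m ℓ) w) (hc : ccol g hm s(vu m ℓ, w) = n) :
    ∃ i, g i 0 = n ∧ ((w = vv m ℓ ∧ ℓ i = 1) ∨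
      ∃ j : Fin (ℓ i - 1), w = vX i j ∧ (j : ℕ) = 0) := by
  rw [adj_u_iff] at hadj
  rcases hadj with ⟨rfl, hex⟩ | ⟨i, j, rfl, hj⟩
  · exact ⟨i0 m ℓ hm, by rw [← hc, ccol_uv], Or.inl ⟨rfl, i0_spec hex⟩⟩
  · exact ⟨i, by rw [← hc, ccol_uX], Or.inr ⟨j, rfl, hj⟩⟩

lemma prop_u (hℓ : ∀ i, 1 ≤ ℓ i) (hg1 : Function.Injective fun i => g i 0) (n : ℕ) :
    {w | (theta m ℓ).Adj (vu m ℓ) w ∧ ccol g hm s(vu m ℓ, w) = n}.Subsingleton := by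
  rintro w ⟨ha, hc⟩ w' ⟨ha', hc'⟩
  obtain ⟨i, hgi, hw⟩ := key_u hℓ ha hc
  obtain ⟨i', hgi', hw'⟩ := key_u hℓ ha' hc'
  have hii : i = i' := hg1 (by simpa using hgi.trans hgi'.symm)
  subst hii
  rcases hw with ⟨rfl, h1⟩ | ⟨j, rfl, hj⟩ <;> rcases hw' with ⟨rfl, h1'⟩ | ⟨j', rfl, hj'⟩
  · rfl
  · exact absurd j'.isLt (by omega)
  · exact absurd j.isLt (by omega)
  · exact X_inj.mpr ⟨rfl, by omega⟩

lemma key_v (hℓ : ∀ i, 1 ≤ ℓ i) {w : ThetaVert m ℓ} {n : ℕ}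
    (hadj : (theta m ℓ).Adj (vv m ℓ) w) (hc : ccol g hm s(vv m ℓ, w) = n) :
    ∃ i, g i (ℓ i - 1) = n ∧ ((w = vu m ℓ ∧ ℓ i = 1) ∨
      ∃ j : Fin (ℓ i - 1), w = vX i j ∧ (j : ℕ) + 2 = ℓ i) := by
  rw [adj_v_iff] at hadj
  rcases hadj with ⟨rfl, hex⟩ | ⟨i, j, rfl, hj⟩
  · refine ⟨i0 m ℓ hm, ?_, Or.inl ⟨rfl, i0_spec hex⟩⟩
    have h1 := i0_spec (hm := hm) hex
    have h2 : ccol g hm s(vv m ℓ, vu m ℓ) = g (i0 m ℓ hm) 0 := by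
      rw [Sym2.eq_swap]; exact ccol_uv g hm
    rw [← hc, h2, h1]
  · exact ⟨i, by rw [← hc, ccol_vX], Or.inr ⟨j, rfl, hj⟩⟩

lemma prop_v (hℓ : ∀ i, 1 ≤ ℓ i)
    (hg2 : Function.Injective fun i => g i (ℓ i - 1)) (n : ℕ) :
    {w | (theta m ℓ).Adj (vv m ℓ) w ∧ ccol g hm s(vv m ℓ, w) = n}.Subsingleton := by
  rintro w ⟨ha, hc⟩ w' ⟨ha', hc'⟩
  obtain ⟨i, hgi, hw⟩ := key_v hℓ ha hc
  obtain ⟨i', hgi', hw'⟩ := key_v hℓ ha' hc'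
  have hii : i = i' := hg2 (by simpa using hgi.trans hgi'.symm)
  subst hii
  rcases hw with ⟨rfl, h1⟩ | ⟨j, rfl, hj⟩ <;> rcases hw' with ⟨rfl, h1'⟩ | ⟨j', rfl, hj'⟩
  · rfl
  · exact absurd j'.isLt (by omega)
  · exact absurd j.isLt (by omega)
  · exact X_inj.mpr ⟨rfl, by omega⟩

def leftN (i : Fin m) (j : Fin (ℓ i - 1)) : ThetaVert m ℓ :=
  if (j : ℕ) = 0 then vu m ℓ else vX i ⟨(j : ℕ) - 1, by have := j.isLt; omega⟩

def rightN (i : Fin m) (j : Fin (ℓ i - 1)) : ThetaVert m ℓ :=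
  if h : (j : ℕ) + 2 = ℓ i then vv m ℓ else
    vX i ⟨(j : ℕ) + 1, by have := j.isLt; omega⟩

lemma neighbor_X {i : Fin m} {j : Fin (ℓ i - 1)} {w : ThetaVert m ℓ}
    (hadj : (theta m ℓ).Adj (vX i j) w) : w = leftN i j ∨ w = rightN i j := by
  rw [adj_X_iff] at hadj
  rcases hadj with ⟨rfl, hj0⟩ | ⟨rfl, hj2⟩ | ⟨j', rfl, hd⟩
  · left; rw [leftN, if_pos hj0]
  · right; rw [rightN, dif_pos hj2]
  · simp only [Nat.dist] at hd
    rcases Nat.lt_or_ge (j : ℕ) (j' : ℕ) with hlt | hge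
    · right
      have hne : ¬ (j : ℕ) + 2 = ℓ i := by have := j'.isLt; omega
      rw [rightN, dif_neg hne]
      exact X_inj.mpr ⟨rfl, by simp only [Fin.val_mk]; omega⟩
    · left
      have hne : ¬ (j : ℕ) = 0 := by omega
      rw [leftN, if_neg hne]
      exact X_inj.mpr ⟨rfl, by simp only [Fin.val_mk]; omega⟩

lemma col_left {i : Fin m} {j : Fin (ℓ i - 1)} :
    ccol g hm s(vX i j, leftN i j) = g i (j : ℕ) := by
  rw [leftN]
  split_ifs with h
  · have : ccol g hm s(vX i j, vu m ℓ) = g i 0 := by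
      rw [Sym2.eq_swap]; exact ccol_uX g hm i j
    rw [this, h]
  · rw [ccol_XX]
    congr 1
    simp only [Fin.val_mk]
    omega

lemma col_right {i : Fin m} {j : Fin (ℓ i - 1)} :
    ccol g hm s(vX i j, rightN i j) = g i ((j : ℕ) + 1) := by
  rw [rightN]
  split_ifs with h
  · have : ccol g hm s(vX i j, vv m ℓ) = g i (ℓ i - 1) := by
      rw [Sym2.eq_swap]; exact ccol_vX g hm i j
    rw [this]
    congr 1
    omega
  · rw [ccol_XX]
    congr 1
    simp only [Fin.val_mk]
    omega

lemma prop_X_ncard (i : Fin m) (j : Fin (ℓ i - 1)) (n : ℕ) :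
    {w | (theta m ℓ).Adj (vX i j) w ∧ ccol g hm s(vX i j, w) = n}.ncard ≤ 2 := by
  have hsub : {w | (theta m ℓ).Adj (vX i j) w ∧ ccol g hm s(vX i j, w) = n} ⊆
      {leftN i j, rightN i j} := by
    rintro w ⟨ha, _⟩
    rcases neighbor_X ha with rfl | rfl
    · exact Set.mem_insert _ _
    · exact Set.mem_insert_of_mem _ rfl
  calc ({w | (theta m ℓ).Adj (vX i j) w ∧ ccol g hm s(vX i j, w) = n}).ncard
      ≤ ({leftN i j, rightN i j} : Set (ThetaVert m ℓ)).ncard :=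
        Set.ncard_le_ncard hsub (Set.toFinite _)
    _ ≤ 2 := by
        apply le_trans (Set.ncard_insert_le _ _)
        simp

lemma prop_X_subsingleton {i : Fin m} {j : Fin (ℓ i - 1)}
    (hne : g i (j : ℕ) ≠ g i ((j : ℕ) + 1)) (n : ℕ) :
    {w | (theta m ℓ).Adj (vX i j) w ∧ ccol g hm s(vX i j, w) = n}.Subsingleton := by
  rintro w ⟨ha, hc⟩ w' ⟨ha', hc'⟩
  rcases neighbor_X ha with rfl | rfl <;> rcases neighbor_X ha' with rfl | rfl
  · rfl
  · exfalso
    apply hne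
    rw [← col_left (hm := hm) (g := g), hc, ← hc', col_right]
  · exfalso
    apply hne
    rw [← col_left (hm := hm) (g := g), hc', ← hc, col_right]
  · rfl

end Properness

section Master
variable {g : Fin m → ℕ → ℕ}

lemma isIntervalSet_pair {a b : ℕ} (h : Nat.dist a b ≤ 1) :
    IsIntervalSet ({a, b} : Set ℕ) := by
  intro x hx y hy z hz1 hz2
  simp only [Set.mem_insert_iff, Set.mem_singleton_iff] at hx hy ⊢
  simp only [Nat.dist] at h
  rcases hx with rfl | rfl <;> rcases hy with rfl | rfl <;> omega

lemma master (g : Fin m → ℕ → ℕ) (hm0 : 0 < m)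
    (hℓ : ∀ i, 1 ≤ ℓ i) (hone : ∀ i j, ℓ i = 1 → ℓ j = 1 → i = j)
    (hg1 : Function.Injective fun i => g i 0)
    (hg2 : Function.Injective fun i => g i (ℓ i - 1))
    (hI1 : IsIntervalSet (Set.range fun i => g i 0))
    (hI2 : IsIntervalSet (Set.range fun i => g i (ℓ i - 1)))
    (hstep : ∀ i t, t + 2 ≤ ℓ i → Nat.dist (g i t) (g i (t + 1)) ≤ 1)
    (k : ℕ) (hk1 : 1 ≤ k)
    (hflat : ∀ i t, t + 2 ≤ ℓ i → g i t = g i (t + 1) → 2 ≤ k) :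
    (theta m ℓ).IsImproperIntervalColoring (ccol g hm0) k := by
  constructor
  · intro w n
    rcases w with (b | ⟨i, j⟩)
    · cases b
      · exact le_trans (ncard_le_one_of_subsingleton (prop_v hℓ hg2 n)) hk1
      · exact le_trans (ncard_le_one_of_subsingleton (prop_u hℓ hg1 n)) hk1
    · by_cases hne : g i (j : ℕ) = g i ((j : ℕ) + 1)
      · have h2 : 2 ≤ k := hflat i j (by have := j.isLt; omega) hne
        exact le_trans (prop_X_ncard i j n) h2
      · exact le_trans (ncard_le_one_of_subsingleton (prop_X_subsingleton hne n)) hk1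
  · intro w
    rcases w with (b | ⟨i, j⟩)
    · cases b
      · rw [show (Sum.inl false : ThetaVert m ℓ) = vv m ℓ from rfl, spectrum_v hℓ hone]
        exact hI2
      · rw [show (Sum.inl true : ThetaVert m ℓ) = vu m ℓ from rfl, spectrum_u hℓ hone]
        exact hI1
    · rw [show (Sum.inr ⟨i, j⟩ : ThetaVert m ℓ) = vX i j from rfl, spectrum_X i j]
      exact isIntervalSet_pair (hstep i j (by have := j.isLt; omega))

def gwalk (pos : Fin m → ℕ) (bet : ℕ → ℕ) (fl : Fin m → ℕ) : Fin m → ℕ → ℕ :=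
  fun i t => walk (pos i) (bet (pos i)) (t - fl i)

lemma build (pos : Fin m → ℕ) (bet : ℕ → ℕ) (fl : Fin m → ℕ) (B : ℕ) (k : ℕ)
    (hm0 : 0 < m) (hℓ : ∀ i, 1 ≤ ℓ i) (hone : ∀ i j, ℓ i = 1 → ℓ j = 1 → i = j)
    (hposlt : ∀ i, pos i < m)
    (hposinj : Function.Injective pos)
    (hpossurj : ∀ p, p < m → ∃ i, pos i = p)
    (hbet : ∀ p, p < m → B ≤ bet p ∧ bet p < B + m)
    (hbetinj : ∀ p q, p < m → q < m → bet p = bet q → p = q)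
    (hbetsurj : ∀ q, B ≤ q → q < B + m → ∃ p, p < m ∧ bet p = q)
    (hfl01 : ∀ i, fl i ≤ 1)
    (hbound : ∀ i, Nat.dist (pos i) (bet (pos i)) + fl i ≤ ℓ i - 1)
    (hpar : ∀ i, Even (ℓ i - 1 - fl i - Nat.dist (pos i) (bet (pos i))))
    (hk1 : 1 ≤ k) (hfl2 : ∀ i, fl i = 1 → 2 ≤ k) :
    (theta m ℓ).IsImproperIntervalColoring (ccol (gwalk pos bet fl) hm0) k := by
  have hzero : ∀ i, gwalk pos bet fl i 0 = pos i := by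
    intro i
    rw [gwalk, Nat.zero_sub, walk_zero]
  have hend : ∀ i, gwalk pos bet fl i (ℓ i - 1) = bet (pos i) := by
    intro i
    rw [gwalk]
    have h1 := hbound i
    have h2 := hpar i
    apply walk_last
    · omega
    · exact h2
  apply master _ hm0 hℓ hone
  · intro i i' h
    simp only [hzero] at h
    exact hposinj h
  · intro i i' h
    simp only [hend] at h
    exact hposinj (hbetinj _ _ (hposlt i) (hposlt i') h)
  · have : (Set.range fun i => gwalk pos bet fl i 0) = Set.Iio m := by
      ext n
      simp only [Set.mem_range, Set.mem_Iio, hzero]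
      constructor
      · rintro ⟨i, rfl⟩; exact hposlt i
      · intro h; exact hpossurj n h
    rw [this]
    intro a _ b hb x _ h2
    simp only [Set.mem_Iio] at *
    omega
  · have : (Set.range fun i => gwalk pos bet fl i (ℓ i - 1)) = Set.Ico B (B + m) := by
      ext n
      simp only [Set.mem_range, Set.mem_Ico, hend]
      constructor
      · rintro ⟨i, rfl⟩; exact hbet _ (hposlt i)
      · rintro ⟨h1, h2⟩
        obtain ⟨p, hp, hbp⟩ := hbetsurj n h1 h2
        obtain ⟨i, rfl⟩ := hpossurj p hp
        exact ⟨i, hbp⟩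
    rw [this]
    intro a ha b hb x h1 h2
    simp only [Set.mem_Ico] at *
    omega
  · intro i t ht
    rcases Nat.le_one_iff_eq_zero_or_eq_one.mp (hfl01 i) with h0 | h1
    · simp only [gwalk, h0, Nat.sub_zero]
      exact le_of_eq (walk_step _ _ _)
    · rcases Nat.eq_zero_or_pos t with rfl | htpos
      · simp only [gwalk, h1]
        norm_num
      · simp only [gwalk, h1]
        have e1 : t - 1 + 1 = t + 1 - 1 := by omega
        calc Nat.dist (walk (pos i) (bet (pos i)) (t - 1))
              (walk (pos i) (bet (pos i)) (t + 1 - 1)) = 1 := by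
              rw [← e1]; exact walk_step _ _ _
          _ ≤ 1 := le_refl 1
  · exact hk1
  · intro i t ht heq
    rcases Nat.le_one_iff_eq_zero_or_eq_one.mp (hfl01 i) with h0 | h1
    · exfalso
      simp only [gwalk, h0, Nat.sub_zero] at heq
      have := walk_step (pos i) (bet (pos i)) t
      rw [heq, Nat.dist_self] at this
      omega
    · exact hfl2 i h1

end Master

section RK
variable {ι : Fin m → ℕ}

noncomputable def rk (ι : Fin m → ℕ) (i : Fin m) : ℕ :=
  (Finset.univ.filter (fun j => ι j < ι i)).card

lemma rk_lt (i : Fin m) : rk ι i < m := by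
  have hsub : Finset.univ.filter (fun j => ι j < ι i) ⊆ Finset.univ.erase i := by
    intro j hj
    simp only [Finset.mem_filter, Finset.mem_univ, true_and] at hj
    simp only [Finset.mem_erase, Finset.mem_univ, and_true]
    intro h; subst h; omega
  calc rk ι i ≤ (Finset.univ.erase i).card := Finset.card_le_card hsub
    _ = m - 1 := by rw [Finset.card_erase_of_mem (Finset.mem_univ i)]; simp
    _ < m := by have := i.pos; omega

lemma rk_strict {i i' : Fin m} (h : ι i < ι i') : rk ι i < rk ι i' := by
  apply Finset.card_lt_card
  constructor
  · intro j hj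
    simp only [Finset.mem_filter, Finset.mem_univ, true_and] at *
    omega
  · intro hsub
    have := hsub (by simp only [Finset.mem_filter, Finset.mem_univ, true_and]; exact h :
      i ∈ Finset.univ.filter (fun j => ι j < ι i'))
    simp only [Finset.mem_filter, Finset.mem_univ, true_and] at this
    omega

lemma rk_inj (hinj : Function.Injective ι) : Function.Injective (rk ι) := by
  intro i i' h
  rcases lt_trichotomy (ι i) (ι i') with hlt | heq | hgt
  · exact absurd h (Nat.ne_of_lt (rk_strict hlt))
  · exact hinj heq
  · exact absurd h.symm (Nat.ne_of_lt (rk_strict hgt))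

lemma rk_surj (hinj : Function.Injective ι) : ∀ p, p < m → ∃ i, rk ι i = p := by
  intro p hp
  have hbij : Function.Bijective (fun i => (⟨rk ι i, rk_lt i⟩ : Fin m)) := by
    rw [Fintype.bijective_iff_injective_and_card]
    exact ⟨fun i i' h => rk_inj hinj (by simpa [Fin.ext_iff] using h), rfl⟩
  obtain ⟨i, hi⟩ := hbij.2 ⟨p, hp⟩
  exact ⟨i, by simpa [Fin.ext_iff] using hi⟩

lemma le_rk {i : Fin m} (S : Finset (Fin m)) (h : ∀ j ∈ S, ι j < ι i) : S.card ≤ rk ι i := by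
  apply Finset.card_le_card
  intro j hj
  simp only [Finset.mem_filter, Finset.mem_univ, true_and]
  exact h j hj

lemma rk_lt_card {i : Fin m} {S : Finset (Fin m)} (hi : i ∈ S)
    (h : ∀ j, ι j < ι i → j ∈ S) : rk ι i < S.card := by
  have hsub : Finset.univ.filter (fun j => ι j < ι i) ⊆ S.erase i := by
    intro j hj
    simp only [Finset.mem_filter, Finset.mem_univ, true_and] at hj
    refine Finset.mem_erase.mpr ⟨?_, h j hj⟩
    intro hji; subst hji; omega
  calc rk ι i ≤ (S.erase i).card := Finset.card_le_card hsub
    _ < S.card := by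
        rw [Finset.card_erase_of_mem hi]
        have : 0 < S.card := Finset.card_pos.mpr ⟨i, hi⟩
        omega

end RK

section Constructions
variable (m ℓ)

noncomputable def EE (m : ℕ) (ℓ : Fin m → ℕ) : Finset (Fin m) :=
  Finset.univ.filter (fun i => Even (ℓ i))

noncomputable def tE (m : ℕ) (ℓ : Fin m → ℕ) : ℕ := (EE m ℓ).card

variable {m ℓ}

lemma tE_le : tE m ℓ ≤ m := by
  calc tE m ℓ ≤ Finset.univ.card := Finset.card_le_univ _
    _ = m := by simp

-- key-based rank positions
noncomputable def posA : Fin m → ℕ :=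
  rk (fun j => (if Even (ℓ j) then 0 else 1) * m + (j : ℕ))

lemma iotaA_inj : Function.Injective (fun j : Fin m =>
    (if Even (ℓ j) then 0 else 1) * m + (j : ℕ)) := by
  intro i i' h
  simp only [] at h
  have h1 := i.isLt
  have h2 := i'.isLt
  apply Fin.ext
  split_ifs at h <;> omega

lemma posA_lt (i : Fin m) : posA (ℓ := ℓ) i < m := rk_lt i

lemma posA_block (hℓ : ∀ i, 1 ≤ ℓ i) (i : Fin m) :
    Even (ℓ i) ↔ posA (ℓ := ℓ) i < tE m ℓ := by
  constructor
  · intro hE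
    apply rk_lt_card (S := EE m ℓ)
    · simp only [EE, Finset.mem_filter, Finset.mem_univ, true_and]; exact hE
    · intro j hj
      simp only [if_pos hE, EE, Finset.mem_filter, Finset.mem_univ, true_and] at *
      by_contra hje
      rw [if_neg hje] at hj
      have := i.isLt
      omega
  · intro hlt
    by_contra hne
    have : tE m ℓ ≤ posA (ℓ := ℓ) i := by
      apply le_rk (S := EE m ℓ)
      intro j hj
      simp only [EE, Finset.mem_filter, Finset.mem_univ, true_and] at hj
      simp only [if_pos hj, if_neg hne]
      have := j.isLt
      omega
    omega

noncomputable def betA (tE : ℕ) : ℕ → ℕ :=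
  fun q => if q < tE then (if q % 2 = 0 then q + 1 else q - 1) else q

noncomputable def posB : Fin m → ℕ :=
  rk (fun j => (if Even (ℓ j) then 0 else if ℓ j = 1 then 2 else 1) * m + (j : ℕ))

lemma iotaB_inj : Function.Injective (fun j : Fin m =>
    (if Even (ℓ j) then 0 else if ℓ j = 1 then 2 else 1) * m + (j : ℕ)) := by
  intro i i' h
  simp only [] at h
  have h1 := i.isLt
  have h2 := i'.isLt
  apply Fin.ext
  split_ifs at h <;> omega

lemma posB_lt (i : Fin m) : posB (ℓ := ℓ) i < m := rk_lt i

lemma posB_block (i : Fin m) :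
    Even (ℓ i) ↔ posB (ℓ := ℓ) i < tE m ℓ := by
  constructor
  · intro hE
    apply rk_lt_card (S := EE m ℓ)
    · simp only [EE, Finset.mem_filter, Finset.mem_univ, true_and]; exact hE
    · intro j hj
      simp only [if_pos hE, EE, Finset.mem_filter, Finset.mem_univ, true_and] at *
      by_contra hje
      rw [if_neg hje] at hj
      have := i.isLt
      split_ifs at hj <;> omega
  · intro hlt
    by_contra hne
    have : tE m ℓ ≤ posB (ℓ := ℓ) i := by
      apply le_rk (S := EE m ℓ)
      intro j hj
      simp only [EE, Finset.mem_filter, Finset.mem_univ, true_and] at hj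
      simp only [if_pos hj, if_neg hne]
      have := j.isLt
      split_ifs <;> omega
    omega

lemma posB_one (hone : ∀ i j, ℓ i = 1 → ℓ j = 1 → i = j) {i : Fin m} (h1 : ℓ i = 1) :
    posB (ℓ := ℓ) i = m - 1 := by
  have hub : posB (ℓ := ℓ) i < m := posB_lt i
  have hlb : m - 1 ≤ posB (ℓ := ℓ) i := by
    have hcard : (Finset.univ.erase i).card = m - 1 := by
      rw [Finset.card_erase_of_mem (Finset.mem_univ i)]; simp
    rw [← hcard]
    apply le_rk
    intro j hj
    have hji : j ≠ i := (Finset.mem_erase.mp hj).1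
    have hkeyi : ¬ Even (ℓ i) := by rw [h1]; simp
    simp only [if_neg hkeyi, if_pos h1]
    have hj1 : ℓ j ≠ 1 := fun hh => hji (hone j i hh h1)
    have := j.isLt
    split_ifs <;> omega
  omega

noncomputable def betB (tE : ℕ) : ℕ → ℕ :=
  fun q => if q < tE then q + 1 else if (q - tE) % 2 = 0 then q + 2 else q

noncomputable def betC (tE : ℕ) : ℕ → ℕ :=
  fun q => if q + 1 < tE then (if q % 2 = 0 then q + 1 else q - 1) else q

-- Case A: number of even-length paths is even; proper (k = 1) coloring.
lemma existsA (hm0 : 0 < m) (hℓ : ∀ i, 1 ≤ ℓ i) (hone : ∀ i j, ℓ i = 1 → ℓ j = 1 → i = j)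
    (ht : Even (tE m ℓ)) :
    ∃ c : Sym2 (ThetaVert m ℓ) → ℕ, (theta m ℓ).IsImproperIntervalColoring c 1 := by
  have htm := tE_le (m := m) (ℓ := ℓ)
  have ht2 := Nat.even_iff.mp ht
  refine ⟨_, build (posA (ℓ := ℓ)) (betA (tE m ℓ)) (fun _ => 0) 0 1 hm0 hℓ hone
    posA_lt (rk_inj (iotaA_inj (ℓ := ℓ))) (rk_surj (iotaA_inj (ℓ := ℓ))) ?_ ?_ ?_ (fun _ => Nat.zero_le 1) ?_ ?_
    (le_refl 1) (fun i h => by simp at h)⟩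
  · intro p hp
    simp only [betA]
    split_ifs <;> omega
  · intro p q hp hq h
    simp only [betA] at h
    split_ifs at h <;> omega
  · intro q h0 hqm
    refine ⟨if q < tE m ℓ then (if q % 2 = 0 then q + 1 else q - 1) else q, ?_, ?_⟩
    · split_ifs <;> omega
    · simp only [betA]
      split_ifs <;> omega
  · intro i
    rcases (em (Even (ℓ i))) with hE | hE
    · have hp : posA (ℓ := ℓ) i < tE m ℓ := (posA_block hℓ i).mp hE
      have hE2 := Nat.even_iff.mp hE
      have hl := hℓ i
      simp only [betA, if_pos hp, Nat.dist]
      split_ifs <;> omega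
    · have hp : ¬ posA (ℓ := ℓ) i < tE m ℓ := fun hh => hE ((posA_block hℓ i).mpr hh)
      simp only [betA, if_neg hp, Nat.dist]
      omega
  · intro i
    rcases (em (Even (ℓ i))) with hE | hE
    · have hp : posA (ℓ := ℓ) i < tE m ℓ := (posA_block hℓ i).mp hE
      have hE2 := Nat.even_iff.mp hE
      have hl := hℓ i
      rw [Nat.even_iff]
      simp only [betA, if_pos hp, Nat.dist]
      split_ifs <;> omega
    · have hp : ¬ posA (ℓ := ℓ) i < tE m ℓ := fun hh => hE ((posA_block hℓ i).mpr hh)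
      have hE2 := Nat.odd_iff.mp (Nat.not_even_iff_odd.mp hE)
      rw [Nat.even_iff]
      simp only [betA, if_neg hp, Nat.dist]
      omega

-- Case B: number of even-length paths odd, m odd; proper (k = 1) coloring.
lemma existsB (hm0 : 0 < m) (hℓ : ∀ i, 1 ≤ ℓ i) (hone : ∀ i j, ℓ i = 1 → ℓ j = 1 → i = j)
    (ht : ¬ Even (tE m ℓ)) (hmo : ¬ Even m) :
    ∃ c : Sym2 (ThetaVert m ℓ) → ℕ, (theta m ℓ).IsImproperIntervalColoring c 1 := by
  have htm := tE_le (m := m) (ℓ := ℓ)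
  have ht2 := Nat.odd_iff.mp (Nat.not_even_iff_odd.mp ht)
  have hm2 := Nat.odd_iff.mp (Nat.not_even_iff_odd.mp hmo)
  refine ⟨_, build (posB (ℓ := ℓ)) (betB (tE m ℓ)) (fun _ => 0) 1 1 hm0 hℓ hone
    posB_lt (rk_inj (iotaB_inj (ℓ := ℓ))) (rk_surj (iotaB_inj (ℓ := ℓ))) ?_ ?_ ?_ (fun _ => Nat.zero_le 1) ?_ ?_
    (le_refl 1) (fun i h => by simp at h)⟩
  · intro p hp
    simp only [betB]
    split_ifs <;> omega
  · intro p q hp hq h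
    simp only [betB] at h
    split_ifs at h <;> omega
  · intro q h0 hqm
    refine ⟨if q ≤ tE m ℓ then q - 1 else if (q - tE m ℓ) % 2 = 0 then q - 2 else q, ?_, ?_⟩
    · split_ifs <;> omega
    · simp only [betB]
      split_ifs <;> omega
  · intro i
    rcases (em (Even (ℓ i))) with hE | hE
    · have hp : posB (ℓ := ℓ) i < tE m ℓ := (posB_block i).mp hE
      have hE2 := Nat.even_iff.mp hE
      have hl := hℓ i
      simp only [betB, if_pos hp, Nat.dist]
      omega
    · have hp : ¬ posB (ℓ := ℓ) i < tE m ℓ := fun hh => hE ((posB_block i).mpr hh)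
      have hE2 := Nat.odd_iff.mp (Nat.not_even_iff_odd.mp hE)
      rcases em (ℓ i = 1) with h1 | h1
      · have hpos := posB_one hone h1
        have hplt := posB_lt (ℓ := ℓ) i
        simp only [betB, if_neg hp, Nat.dist]
        rw [h1]
        split_ifs <;> omega
      · have hl3 : 3 ≤ ℓ i := by have := hℓ i; omega
        have hplt := posB_lt (ℓ := ℓ) i
        simp only [betB, if_neg hp, Nat.dist]
        split_ifs <;> omega
  · intro i
    rcases (em (Even (ℓ i))) with hE | hE
    · have hp : posB (ℓ := ℓ) i < tE m ℓ := (posB_block i).mp hE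
      have hE2 := Nat.even_iff.mp hE
      have hl := hℓ i
      rw [Nat.even_iff]
      simp only [betB, if_pos hp, Nat.dist]
      omega
    · have hp : ¬ posB (ℓ := ℓ) i < tE m ℓ := fun hh => hE ((posB_block i).mpr hh)
      have hE2 := Nat.odd_iff.mp (Nat.not_even_iff_odd.mp hE)
      rcases em (ℓ i = 1) with h1 | h1
      · have hpos := posB_one hone h1
        have hplt := posB_lt (ℓ := ℓ) i
        rw [Nat.even_iff]
        simp only [betB, if_neg hp, Nat.dist]
        rw [h1]
        split_ifs <;> omega
      · have hl3 : 3 ≤ ℓ i := by have := hℓ i; omega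
        have hplt := posB_lt (ℓ := ℓ) i
        rw [Nat.even_iff]
        simp only [betB, if_neg hp, Nat.dist]
        split_ifs <;> omega

-- Case C: number of even-length paths odd, m even; 2-improper coloring.
lemma existsC (hm0 : 0 < m) (hℓ : ∀ i, 1 ≤ ℓ i) (hone : ∀ i j, ℓ i = 1 → ℓ j = 1 → i = j)
    (ht : ¬ Even (tE m ℓ)) :
    ∃ c : Sym2 (ThetaVert m ℓ) → ℕ, (theta m ℓ).IsImproperIntervalColoring c 2 := by
  have htm := tE_le (m := m) (ℓ := ℓ)
  have ht2 := Nat.odd_iff.mp (Nat.not_even_iff_odd.mp ht)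
  refine ⟨_, build (posA (ℓ := ℓ)) (betC (tE m ℓ))
    (fun i => if posA (ℓ := ℓ) i = tE m ℓ - 1 then 1 else 0) 0 2 hm0 hℓ hone
    posA_lt (rk_inj (iotaA_inj (ℓ := ℓ))) (rk_surj (iotaA_inj (ℓ := ℓ))) ?_ ?_ ?_
    (fun i => by
      show (if posA (ℓ := ℓ) i = tE m ℓ - 1 then (1:ℕ) else 0) ≤ 1
      split_ifs <;> omega) ?_ ?_
    (by omega) (fun i h => le_refl 2)⟩
  · intro p hp
    simp only [betC]
    split_ifs <;> omega
  · intro p q hp hq h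
    simp only [betC] at h
    split_ifs at h <;> omega
  · intro q h0 hqm
    refine ⟨if q + 1 < tE m ℓ then (if q % 2 = 0 then q + 1 else q - 1) else q, ?_, ?_⟩
    · split_ifs <;> omega
    · simp only [betC]
      split_ifs <;> omega
  · intro i
    rcases (em (Even (ℓ i))) with hE | hE
    · have hp : posA (ℓ := ℓ) i < tE m ℓ := (posA_block hℓ i).mp hE
      have hE2 := Nat.even_iff.mp hE
      have hl := hℓ i
      simp only [betC, Nat.dist]
      split_ifs <;> omega
    · have hp : ¬ posA (ℓ := ℓ) i < tE m ℓ := fun hh => hE ((posA_block hℓ i).mpr hh)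
      have hl := hℓ i
      simp only [betC, Nat.dist]
      split_ifs <;> omega
  · intro i
    rcases (em (Even (ℓ i))) with hE | hE
    · have hp : posA (ℓ := ℓ) i < tE m ℓ := (posA_block hℓ i).mp hE
      have hE2 := Nat.even_iff.mp hE
      have hl := hℓ i
      rw [Nat.even_iff]
      simp only [betC, Nat.dist]
      split_ifs <;> omega
    · have hp : ¬ posA (ℓ := ℓ) i < tE m ℓ := fun hh => hE ((posA_block hℓ i).mpr hh)
      have hE2 := Nat.odd_iff.mp (Nat.not_even_iff_odd.mp hE)
      have hl := hℓ i
      rw [Nat.even_iff]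
      simp only [betC, Nat.dist]
      split_ifs <;> omega

end Constructions

section Stats
variable {m : ℕ} {ℓ : Fin m → ℕ}

lemma reach_X (i : Fin m) : ∀ n (j : Fin (ℓ i - 1)), (j : ℕ) = n →
    (theta m ℓ).Reachable (vu m ℓ) (vX i j) := by
  intro n
  induction n with
  | zero =>
    intro j hj
    exact (adj_u_iff.mpr (Or.inr ⟨i, j, rfl, hj⟩)).reachable
  | succ n ih =>
    intro j hj
    have hn : n < ℓ i - 1 := by have := j.isLt; omega
    have h1 := ih ⟨n, hn⟩ rfl
    have h2 : (theta m ℓ).Adj (vX i ⟨n, hn⟩) (vX i j) :=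
      adj_X_iff.mpr (Or.inr (Or.inr ⟨j, rfl, by simp only [Nat.dist, Fin.val_mk]; omega⟩))
    exact h1.trans h2.reachable

lemma theta_connected (hm : 2 ≤ m) (hℓ : ∀ i, 1 ≤ ℓ i) : (theta m ℓ).Connected := by
  have hreach : ∀ w, (theta m ℓ).Reachable (vu m ℓ) w := by
    intro w
    rcases w with (b | ⟨i, j⟩)
    · cases b
      · -- w = vv
        have h0 : (0 : ℕ) < m := by omega
        set i : Fin m := ⟨0, h0⟩
        rcases em (2 ≤ ℓ i) with h2 | h2
        · have hj : ℓ i - 2 < ℓ i - 1 := by omega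
          have hr := reach_X i (ℓ i - 2) ⟨ℓ i - 2, hj⟩ rfl
          have hadj : (theta m ℓ).Adj (vX i ⟨ℓ i - 2, hj⟩) (vv m ℓ) :=
            adj_X_iff.mpr (Or.inr (Or.inl ⟨rfl, by simp only [Fin.val_mk]; omega⟩))
          exact hr.trans hadj.reachable
        · have h1 : ℓ i = 1 := by have := hℓ i; omega
          exact (adj_u_iff.mpr (Or.inl ⟨rfl, ⟨i, h1⟩⟩)).reachable
      · exact Reachable.refl _
    · exact reach_X i (j : ℕ) j rfl
  constructor
  intro a b
  exact (hreach a).symm.trans (hreach b)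

noncomputable def nu (m : ℕ) (ℓ : Fin m → ℕ) (i : Fin m) : ThetaVert m ℓ :=
  if h : 2 ≤ ℓ i then vX i ⟨0, by omega⟩ else vv m ℓ

noncomputable def nv (m : ℕ) (ℓ : Fin m → ℕ) (i : Fin m) : ThetaVert m ℓ :=
  if h : 2 ≤ ℓ i then vX i ⟨ℓ i - 2, by omega⟩ else vu m ℓ

lemma degree_u (hℓ : ∀ i, 1 ≤ ℓ i) (hone : ∀ i j, ℓ i = 1 → ℓ j = 1 → i = j) :
    (theta m ℓ).degree (vu m ℓ) = m := by
  have himg : (theta m ℓ).neighborFinset (vu m ℓ) = Finset.univ.image (nu m ℓ) := by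
    ext w
    rw [SimpleGraph.mem_neighborFinset, adj_u_iff]
    simp only [Finset.mem_image, Finset.mem_univ, true_and]
    constructor
    · rintro (⟨rfl, i1, h1⟩ | ⟨i, j, rfl, hj⟩)
      · exact ⟨i1, by rw [nu, dif_neg (by omega)]⟩
      · refine ⟨i, ?_⟩
        have h2 : 2 ≤ ℓ i := by have := j.isLt; omega
        rw [nu, dif_pos h2]
        exact X_inj.mpr ⟨rfl, by simp only [Fin.val_mk]; omega⟩
    · rintro ⟨i, rfl⟩
      rw [nu]
      rcases em (2 ≤ ℓ i) with h2 | h2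
      · rw [dif_pos h2]
        exact Or.inr ⟨i, ⟨0, by omega⟩, rfl, rfl⟩
      · rw [dif_neg h2]
        exact Or.inl ⟨rfl, ⟨i, by have := hℓ i; omega⟩⟩
  have hinj : Function.Injective (nu m ℓ) := by
    intro i i' h
    rw [nu, nu] at h
    rcases em (2 ≤ ℓ i) with h2 | h2 <;> rcases em (2 ≤ ℓ i') with h2' | h2'
    · rw [dif_pos h2, dif_pos h2'] at h
      exact (X_inj.mp h).1
    · rw [dif_pos h2, dif_neg h2'] at h
      exact absurd h (by simp [vX, vv])
    · rw [dif_neg h2, dif_pos h2'] at h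
      exact absurd h (by simp [vX, vv])
    · exact hone i i' (by have := hℓ i; omega) (by have := hℓ i'; omega)
  rw [SimpleGraph.degree, himg, Finset.card_image_of_injective _ hinj]
  simp

lemma degree_v (hℓ : ∀ i, 1 ≤ ℓ i) (hone : ∀ i j, ℓ i = 1 → ℓ j = 1 → i = j) :
    (theta m ℓ).degree (vv m ℓ) = m := by
  have himg : (theta m ℓ).neighborFinset (vv m ℓ) = Finset.univ.image (nv m ℓ) := by
    ext w
    rw [SimpleGraph.mem_neighborFinset, adj_v_iff]
    simp only [Finset.mem_image, Finset.mem_univ, true_and]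
    constructor
    · rintro (⟨rfl, i1, h1⟩ | ⟨i, j, rfl, hj⟩)
      · exact ⟨i1, by rw [nv, dif_neg (by omega)]⟩
      · refine ⟨i, ?_⟩
        have h2 : 2 ≤ ℓ i := by have := j.isLt; omega
        rw [nv, dif_pos h2]
        exact X_inj.mpr ⟨rfl, by simp only [Fin.val_mk]; omega⟩
    · rintro ⟨i, rfl⟩
      rw [nv]
      rcases em (2 ≤ ℓ i) with h2 | h2
      · rw [dif_pos h2]
        exact Or.inr ⟨i, ⟨ℓ i - 2, by omega⟩, rfl, by simp only [Fin.val_mk]; omega⟩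
      · rw [dif_neg h2]
        exact Or.inl ⟨rfl, ⟨i, by have := hℓ i; omega⟩⟩
  have hinj : Function.Injective (nv m ℓ) := by
    intro i i' h
    rw [nv, nv] at h
    rcases em (2 ≤ ℓ i) with h2 | h2 <;> rcases em (2 ≤ ℓ i') with h2' | h2'
    · rw [dif_pos h2, dif_pos h2'] at h
      exact (X_inj.mp h).1
    · rw [dif_pos h2, dif_neg h2'] at h
      exact absurd h (by simp [vX, vu])
    · rw [dif_neg h2, dif_pos h2'] at h
      exact absurd h (by simp [vX, vu])
    · exact hone i i' (by have := hℓ i; omega) (by have := hℓ i'; omega)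
  rw [SimpleGraph.degree, himg, Finset.card_image_of_injective _ hinj]
  simp

lemma adj_leftN (i : Fin m) (j : Fin (ℓ i - 1)) :
    (theta m ℓ).Adj (vX i j) (leftN i j) := by
  rw [leftN]
  split_ifs with h
  · exact adj_X_iff.mpr (Or.inl ⟨rfl, h⟩)
  · exact adj_X_iff.mpr (Or.inr (Or.inr ⟨_, rfl, by simp only [Nat.dist, Fin.val_mk]; omega⟩))

lemma adj_rightN (i : Fin m) (j : Fin (ℓ i - 1)) :
    (theta m ℓ).Adj (vX i j) (rightN i j) := by
  rw [rightN]
  split_ifs with h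
  · exact adj_X_iff.mpr (Or.inr (Or.inl ⟨rfl, h⟩))
  · exact adj_X_iff.mpr (Or.inr (Or.inr ⟨_, rfl, by simp only [Nat.dist, Fin.val_mk]; omega⟩))

lemma leftN_ne_rightN (i : Fin m) (j : Fin (ℓ i - 1)) : leftN i j ≠ rightN i j := by
  rw [leftN, rightN]
  split_ifs with h1 h2 h2
  · simp [vu, vv]
  · simp [vu, vX]
  · simp [vX, vv]
  · intro h
    have := (X_inj.mp h).2
    simp only [Fin.val_mk] at this
    omega

lemma degree_X (i : Fin m) (j : Fin (ℓ i - 1)) :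
    (theta m ℓ).degree (vX i j) = 2 := by
  have himg : (theta m ℓ).neighborFinset (vX i j) = {leftN i j, rightN i j} := by
    ext w
    rw [SimpleGraph.mem_neighborFinset]
    simp only [Finset.mem_insert, Finset.mem_singleton]
    constructor
    · intro h
      exact neighbor_X h
    · rintro (rfl | rfl)
      · exact adj_leftN i j
      · exact adj_rightN i j
  rw [SimpleGraph.degree, himg, Finset.card_pair (leftN_ne_rightN i j)]

lemma edge_card (hℓ : ∀ i, 1 ≤ ℓ i) (hone : ∀ i j, ℓ i = 1 → ℓ j = 1 → i = j) :
    (theta m ℓ).edgeFinset.card = ∑ i, ℓ i := by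
  have h := SimpleGraph.sum_degrees_eq_twice_card_edges (theta m ℓ)
  have hsum : ∑ w : ThetaVert m ℓ, (theta m ℓ).degree w = 2 * ∑ i, ℓ i := by
    rw [Fintype.sum_sum_type]
    have hbool : ∑ b : Bool, (theta m ℓ).degree (Sum.inl b) = 2 * m := by
      rw [Fintype.sum_bool]
      have h1 : (theta m ℓ).degree (Sum.inl true) = m := degree_u hℓ hone
      have h2 : (theta m ℓ).degree (Sum.inl false) = m := degree_v hℓ hone
      omega
    have hsig : ∑ x : (Σ i : Fin m, Fin (ℓ i - 1)), (theta m ℓ).degree (Sum.inr x) =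
        2 * ∑ i, (ℓ i - 1) := by
      rw [← Finset.univ_sigma_univ, Finset.sum_sigma, Finset.mul_sum]
      apply Finset.sum_congr rfl
      intro i _
      have : ∀ j : Fin (ℓ i - 1), (theta m ℓ).degree (Sum.inr ⟨i, j⟩) = 2 := fun j =>
        degree_X i j
      rw [Finset.sum_congr rfl (fun j _ => this j), Finset.sum_const]
      simp [mul_comm]
    rw [hbool, hsig]
    have hms : ∑ i, ℓ i = m + ∑ i, (ℓ i - 1) := by
      have : ∀ i : Fin m, ℓ i = 1 + (ℓ i - 1) := fun i => by have := hℓ i; omega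
      rw [Finset.sum_congr rfl (fun i _ => this i), Finset.sum_add_distrib]
      simp
    omega
  omega

end Stats

section Lower

lemma count_even_Ico (a : ℕ) : ∀ k, ((Finset.Ico a (a + 2*k)).filter
    (fun x => x % 2 = 0)).card = k := by
  intro k
  induction k with
  | zero => simp
  | succ k ih =>
    have hsplit : Finset.Ico a (a + 2*(k+1)) =
        Finset.Ico a (a + 2*k) ∪ Finset.Ico (a + 2*k) (a + 2*(k+1)) :=
      (Finset.Ico_union_Ico_eq_Ico (by omega) (by omega)).symm
    have hdis : Disjoint ((Finset.Ico a (a + 2*k)).filter (fun x => x % 2 = 0))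
        ((Finset.Ico (a + 2*k) (a + 2*(k+1))).filter (fun x => x % 2 = 0)) := by
      apply Finset.disjoint_filter_filter
      intro s hs1 hs2
      simp only [Finset.le_eq_subset, Finset.bot_eq_empty] at *
      intro x hx
      have h1 := hs1 hx
      have h2 := hs2 hx
      simp only [Finset.mem_Ico] at h1 h2
      omega
    rw [hsplit, Finset.filter_union, Finset.card_union_of_disjoint hdis, ih]
    have hpair : Finset.Ico (a + 2*k) (a + 2*(k+1)) = {a + 2*k, a + 2*k + 1} := by
      ext x
      simp only [Finset.mem_Ico, Finset.mem_insert, Finset.mem_singleton]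
      omega
    rw [hpair]
    by_cases hp : (a + 2*k) % 2 = 0
    · rw [Finset.filter_insert, if_pos hp, Finset.filter_singleton, if_neg (by omega)]
      simp
    · rw [Finset.filter_insert, if_neg hp, Finset.filter_singleton, if_pos (by omega)]
      simp

lemma interval_finset (S : Finset ℕ) (hne : S.Nonempty) (hI : IsIntervalSet ↑S) :
    S = Finset.Ico (S.min' hne) (S.min' hne + S.card) := by
  have hIcc : S = Finset.Icc (S.min' hne) (S.max' hne) := by
    ext x
    simp only [Finset.mem_Icc]
    constructor
    · intro hx
      exact ⟨S.min'_le x hx, S.le_max' x hx⟩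
    · rintro ⟨h1, h2⟩
      have := hI (S.min' hne) (by exact_mod_cast S.min'_mem hne)
        (S.max' hne) (by exact_mod_cast S.max'_mem hne) x h1 h2
      exact_mod_cast this
  have hmm : S.min' hne ≤ S.max' hne := S.min'_le _ (S.max'_mem hne)
  have hcard : S.card = S.max' hne + 1 - S.min' hne := by
    conv_lhs => rw [hIcc]
    rw [Nat.card_Icc]
  conv_lhs => rw [hIcc]
  ext x
  simp only [Finset.mem_Icc, Finset.mem_Ico]
  omega

lemma interval_even_count (S : Finset ℕ) (hI : IsIntervalSet ↑S) (he : Even S.card) :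
    2 * (S.filter (fun x => x % 2 = 0)).card = S.card := by
  rcases S.eq_empty_or_nonempty with rfl | hne
  · simp
  · obtain ⟨k, hk⟩ := he
    have h2k : S.card = 2 * k := by omega
    have := interval_finset S hne hI
    rw [h2k] at this
    conv_lhs => rw [this]
    rw [count_even_Ico, h2k]

variable {V : Type*} [Fintype V] [DecidableEq V]

lemma no_proper (G : SimpleGraph V) [DecidableRel G.Adj] (c : Sym2 V → ℕ)
    (hc : G.IsImproperIntervalColoring c 1)
    (hdeg : ∀ w, Even (G.degree w)) (hodd : Odd G.edgeFinset.card) : False := by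
  classical
  obtain ⟨hprop, hint⟩ := hc
  have hinj : ∀ w, Set.InjOn (fun w' => c s(w, w')) (G.neighborSet w) := by
    intro w w1 h1 w2 h2 heq
    by_contra hne
    have hsub : ({w1, w2} : Set V) ⊆ {w' | G.Adj w w' ∧ c s(w, w') = c s(w, w2)} := by
      rintro x (rfl | rfl)
      · exact ⟨h1, heq⟩
      · exact ⟨h2, rfl⟩
    have h2' := hprop w (c s(w, w2))
    have hle : ({w1, w2} : Set V).ncard ≤ 1 :=
      le_trans (Set.ncard_le_ncard hsub (Set.toFinite _)) h2'
    rw [Set.ncard_pair hne] at hle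
    omega
  set SF : V → Finset ℕ := fun w => (G.neighborFinset w).image (fun w' => c s(w, w'))
    with hSF
  have hcoe : ∀ w, ↑(SF w) = G.colorSpectrum c w := by
    intro w
    ext n
    simp only [hSF, Finset.coe_image, Set.mem_image, Finset.mem_coe,
      SimpleGraph.mem_neighborFinset, SimpleGraph.colorSpectrum, Set.mem_setOf_eq]
  have hcard : ∀ w, (SF w).card = G.degree w := by
    intro w
    rw [SimpleGraph.degree, hSF]
    apply Finset.card_image_of_injOn
    intro x hx y hy heq
    exact hinj w (by simpa using hx) (by simpa using hy) heq
  let G' : SimpleGraph V := {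
    Adj := fun a b => G.Adj a b ∧ c s(a, b) % 2 = 0,
    symm := by
      constructor
      rintro a b ⟨h1, h2⟩
      refine ⟨h1.symm, ?_⟩
      rwa [Sym2.eq_swap],
    loopless := ⟨fun a h => G.loopless.irrefl a h.1⟩ }
  haveI : DecidableRel G'.Adj := Classical.decRel _
  have hdeg' : ∀ w, 2 * G'.degree w = G.degree w := by
    intro w
    have hnb : G'.neighborFinset w =
        (G.neighborFinset w).filter (fun w' => c s(w, w') % 2 = 0) := by
      ext x
      simp only [SimpleGraph.mem_neighborFinset, Finset.mem_filter]
      exact Iff.rfl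
    have himg : (G'.neighborFinset w).image (fun w' => c s(w, w')) =
        (SF w).filter (fun n => n % 2 = 0) := by
      rw [hnb]
      exact (Finset.filter_image (p := fun n => n % 2 = 0)
        (f := fun w' => c s(w, w')) (s := G.neighborFinset w)).symm
    have hinj2 : Set.InjOn (fun w' => c s(w, w')) ↑(G'.neighborFinset w) := by
      intro x hx y hy heq
      rw [Finset.mem_coe, hnb, Finset.mem_filter, SimpleGraph.mem_neighborFinset] at hx hy
      exact hinj w hx.1 hy.1 heq
    have hc1 : G'.degree w = ((SF w).filter (fun n => n % 2 = 0)).card := by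
      rw [SimpleGraph.degree, ← himg, Finset.card_image_of_injOn hinj2]
    rw [hc1, interval_even_count (SF w) (by rw [hcoe]; exact hint w)
      (by rw [hcard]; exact hdeg w), hcard]
  have hh : ∑ w, G.degree w = 2 * G.edgeFinset.card :=
    SimpleGraph.sum_degrees_eq_twice_card_edges G
  have hh' : ∑ w, G'.degree w = 2 * G'.edgeFinset.card :=
    SimpleGraph.sum_degrees_eq_twice_card_edges G'
  have hsum2 : ∑ w, G.degree w = 2 * ∑ w, G'.degree w := by
    rw [Finset.mul_sum]
    exact Finset.sum_congr rfl (fun w _ => (hdeg' w).symm)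
  obtain ⟨r, hr⟩ := hodd
  omega

lemma no_zero (G : SimpleGraph V) {a b : V} (hab : G.Adj a b) (c : Sym2 V → ℕ)
    (hc : G.IsImproperIntervalColoring c 0) : False := by
  have h := hc.1 a (c s(a, b))
  have hmem : b ∈ {w | G.Adj a w ∧ c s(a, w) = c s(a, b)} := ⟨hab, rfl⟩
  have : {w | G.Adj a w ∧ c s(a, w) = c s(a, b)}.ncard = 0 := by omega
  rw [Set.ncard_eq_zero (Set.toFinite _)] at this
  rw [this] at hmem
  exact hmem

end Lower

section Glue
variable {m : ℕ} {ℓ : Fin m → ℕ}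

lemma sum_parity : (∑ i, ℓ i) % 2 =
    ((Finset.univ.filter (fun i : Fin m => ¬ Even (ℓ i))).card) % 2 := by
  rw [Finset.sum_nat_mod, Finset.card_filter]
  congr 1
  apply Finset.sum_congr rfl
  intro i _
  by_cases h : Even (ℓ i)
  · rw [if_neg (by exact fun hh => hh h), Nat.even_iff.mp h]
  · rw [if_pos h, Nat.odd_iff.mp (Nat.not_even_iff_odd.mp h)]

lemma tE_add : tE m ℓ + (Finset.univ.filter (fun i : Fin m => ¬ Even (ℓ i))).card = m := by
  rw [tE, EE]
  rw [Finset.card_filter_add_card_filter_not]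
  simp

end Glue
end ThetaAux


open ThetaAux


/-- `θ_m` (`m ≥ 2`) has impropriety 2 if it is an Eulerian graph with an odd number of
edges, and impropriety 1 otherwise. Here each path has length `ℓ i ≥ 1`, and at most
one path has length 1 (so the graph is simple). -/
theorem statement4 (m : ℕ) (hm : 2 ≤ m) (ℓ : Fin m → ℕ) (hℓ : ∀ i, 1 ≤ ℓ i)
    (hone : ∀ i j, ℓ i = 1 → ℓ j = 1 → i = j) :
    (theta m ℓ).muInt =
      if (theta m ℓ).Connected ∧ (∀ w, Even ((theta m ℓ).degree w)) ∧
          Odd (theta m ℓ).edgeFinset.card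
      then 2 else 1 := by
  have hm0 : 0 < m := by omega
  have hedge : ∃ a b, (theta m ℓ).Adj a b := by
    rcases em (2 ≤ ℓ ⟨0, hm0⟩) with h2 | h2
    · exact ⟨vu m ℓ, vX ⟨0, hm0⟩ ⟨0, by omega⟩,
        adj_u_iff.mpr (Or.inr ⟨⟨0, hm0⟩, ⟨0, by omega⟩, rfl, rfl⟩)⟩
    · exact ⟨vu m ℓ, vv m ℓ,
        adj_u_iff.mpr (Or.inl ⟨rfl, ⟨⟨0, hm0⟩, by have := hℓ ⟨0, hm0⟩; omega⟩⟩)⟩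
  obtain ⟨a0, b0, hab0⟩ := hedge
  have hOsum := sum_parity (m := m) (ℓ := ℓ)
  have htsum := tE_add (m := m) (ℓ := ℓ)
  rw [SimpleGraph.muInt]
  split_ifs with hcond
  · obtain ⟨hconn, hdeg, hodd⟩ := hcond
    have hEm : Even m := by
      have := hdeg (vu m ℓ)
      rwa [degree_u hℓ hone] at this
    have hOsum2 : Odd (∑ i, ℓ i) := by rwa [edge_card hℓ hone] at hodd
    have htodd : ¬ Even (tE m ℓ) := by
      rw [Nat.even_iff]
      have h1 := Nat.even_iff.mp hEm
      have h2 := Nat.odd_iff.mp hOsum2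
      omega
    obtain ⟨c2, hc2⟩ := existsC hm0 hℓ hone htodd
    apply le_antisymm
    · exact Nat.sInf_le ⟨c2, hc2⟩
    · refine le_csInf ⟨2, c2, hc2⟩ fun k hk => ?_
      obtain ⟨c, hc⟩ := hk
      by_contra hlt
      push_neg at hlt
      interval_cases k
      · exact no_zero (theta m ℓ) hab0 c hc
      · exact no_proper (theta m ℓ) c hc hdeg hodd
  · have hnc : ¬ (Even m ∧ ¬ Even (tE m ℓ)) := by
      rintro ⟨hEm, htodd⟩
      apply hcond
      refine ⟨theta_connected hm hℓ, ?_, ?_⟩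
      · intro w
        rcases w with (b | ⟨i, j⟩)
        · cases b
          · rw [show (Sum.inl false : ThetaVert m ℓ) = vv m ℓ from rfl, degree_v hℓ hone]
            exact hEm
          · rw [show (Sum.inl true : ThetaVert m ℓ) = vu m ℓ from rfl, degree_u hℓ hone]
            exact hEm
        · rw [show (Sum.inr ⟨i, j⟩ : ThetaVert m ℓ) = vX i j from rfl, degree_X i j]
          exact ⟨1, rfl⟩
      · rw [edge_card hℓ hone, Nat.odd_iff]
        have h1 := Nat.even_iff.mp hEm
        have h2 : tE m ℓ % 2 = 1 := Nat.odd_iff.mp (Nat.not_even_iff_odd.mp htodd)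
        omega
    have h1 : ∃ c : Sym2 (ThetaVert m ℓ) → ℕ,
        (theta m ℓ).IsImproperIntervalColoring c 1 := by
      rcases em (Even (tE m ℓ)) with ht | ht
      · exact existsA hm0 hℓ hone ht
      · exact existsB hm0 hℓ hone ht (fun hEm => hnc ⟨hEm, ht⟩)
    obtain ⟨c1, hc1⟩ := h1
    apply le_antisymm
    · exact Nat.sInf_le ⟨c1, hc1⟩
    · refine le_csInf ⟨1, c1, hc1⟩ fun k hk => ?_
      obtain ⟨c, hc⟩ := hk
      rcases Nat.eq_zero_or_pos k with rfl | h
      · exact absurd (no_zero (theta m ℓ) hab0 c hc) (fun h => h)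
      · exact h
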